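/- (Proposition 1, singular value soft-thresholding) Let A be a real p×q matrix with singular value decomposition A = U Σ Vᵀ, where U and V are orthogonal matrices of sizes p×p and q×q and Σ is the p×q rectangular diagonal matrix with nonnegative diagonal entries a₁,…,a_{min(p,q)} (the singular values of A). Let λ > 0, and let Σ_λ be the p×q rectangular diagonal matrix with diagonal entries (a_k − λ)₊ = max(a_k − λ, 0). Then B* = U Σ_λ Vᵀ is a global minimizer over B ∈ ℝ^{p×q} of the function B ↦ (1/2)‖B − A‖_F² + λ‖B‖_*; in particular B* has the same singular vectors as A and singular values (a_k − λ)₊. -/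

import Mathlib

open Matrix
/-!
(Proposition 1, singular value soft-thresholding.)
If `A = U Σ Vᵀ` with `U, V` orthogonal and `Σ` rectangular diagonal with
nonnegative diagonal entries `a k`, then `B* = U Σ_λ Vᵀ`, where `Σ_λ` has
diagonal entries `(a k − λ)₊`, is a global minimizer of
`B ↦ (1/2)‖B − A‖_F² + λ‖B‖_*`.
-/

/-- The singular values of a real `p × q` matrix: square roots of the
eigenvalues of `Aᴴ * A`. -/
noncomputable def singVals {p q : ℕ} (A : Matrix (Fin p) (Fin q) ℝ) : Fin q → ℝ :=
  fun i => Real.sqrt ((Matrix.isHermitian_conjTranspose_mul_self A).eigenvalues i)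

/-- The nuclear norm: the sum of the singular values. -/
noncomputable def nuclearNorm {p q : ℕ} (A : Matrix (Fin p) (Fin q) ℝ) : ℝ :=
  ∑ i, singVals A i

/-- The Frobenius norm. -/
noncomputable def frobNorm {p q : ℕ} (A : Matrix (Fin p) (Fin q) ℝ) : ℝ :=
  Real.sqrt (∑ j, ∑ k, (A j k) ^ 2)

/-- The `p × q` rectangular diagonal matrix with diagonal entries `a 0, a 1, …`. -/
def rectDiag (p q : ℕ) (a : ℕ → ℝ) : Matrix (Fin p) (Fin q) ℝ :=
  Matrix.of fun j k => if (j : ℕ) = (k : ℕ) then a (j : ℕ) else 0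
namespace ST

lemma dot_mulVec_left {m n : ℕ} (x : Fin m → ℝ) (M : Matrix (Fin m) (Fin n) ℝ) (y : Fin n → ℝ) :
    x ⬝ᵥ (M *ᵥ y) = (Mᵀ *ᵥ x) ⬝ᵥ y := by
  rw [Matrix.dotProduct_mulVec, ← Matrix.vecMul_transpose, Matrix.transpose_transpose]

lemma dot_mulVec_mulVec {m n : ℕ} (x y : Fin n → ℝ) (M N : Matrix (Fin m) (Fin n) ℝ) :
    (M *ᵥ x) ⬝ᵥ (N *ᵥ y) = x ⬝ᵥ ((Mᵀ * N) *ᵥ y) := by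
  rw [← Matrix.mulVec_mulVec, dot_mulVec_left x Mᵀ, Matrix.transpose_transpose]

noncomputable def evec {p q : ℕ} (M : Matrix (Fin p) (Fin q) ℝ) (i : Fin q) : Fin q → ℝ :=
  ⇑((Matrix.isHermitian_conjTranspose_mul_self M).eigenvectorBasis i)

lemma evec_dot {p q : ℕ} (M : Matrix (Fin p) (Fin q) ℝ) (i j : Fin q) :
    evec M i ⬝ᵥ evec M j = if i = j then 1 else 0 := by
  have := (Matrix.isHermitian_conjTranspose_mul_self M).eigenvectorBasis.orthonormal
  rw [orthonormal_iff_ite] at this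
  simpa [PiLp.inner_apply, RCLike.inner_apply, conj_trivial, dotProduct, evec, mul_comm] using this i j

lemma evec_eigen {p q : ℕ} (M : Matrix (Fin p) (Fin q) ℝ) (i : Fin q) :
    (Mᵀ * M) *ᵥ evec M i =
      (Matrix.isHermitian_conjTranspose_mul_self M).eigenvalues i • evec M i :=
  (Matrix.isHermitian_conjTranspose_mul_self M).mulVec_eigenvectorBasis i

lemma Mv_dot_Mv {p q : ℕ} (M : Matrix (Fin p) (Fin q) ℝ) (i : Fin q) :
    (M *ᵥ evec M i) ⬝ᵥ (M *ᵥ evec M i) =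
      (Matrix.isHermitian_conjTranspose_mul_self M).eigenvalues i := by
  rw [dot_mulVec_mulVec, evec_eigen, dotProduct_smul, smul_eq_mul, evec_dot]
  simp

lemma singVals_eq {p q : ℕ} (M : Matrix (Fin p) (Fin q) ℝ) (i : Fin q) :
    singVals M i = Real.sqrt ((M *ᵥ evec M i) ⬝ᵥ (M *ᵥ evec M i)) := by
  rw [Mv_dot_Mv]; rfl

/-- Frobenius inner product -/
def fip {p q : ℕ} (X Y : Matrix (Fin p) (Fin q) ℝ) : ℝ := ∑ j, ∑ k, X j k * Y j k

lemma fip_eq_trace {p q : ℕ} (X Y : Matrix (Fin p) (Fin q) ℝ) :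
    fip X Y = Matrix.trace (Xᵀ * Y) := by
  simp [fip, Matrix.trace, Matrix.mul_apply, Matrix.diag]
  rw [Finset.sum_comm]

lemma fip_eq_sum_dot {p q : ℕ} (X Y : Matrix (Fin p) (Fin q) ℝ)
    (v : Fin q → Fin q → ℝ) (hv : ∀ i j, v i ⬝ᵥ v j = if i = j then 1 else 0) :
    fip X Y = ∑ i, (X *ᵥ v i) ⬝ᵥ (Y *ᵥ v i) := by
  classical
  set W : Matrix (Fin q) (Fin q) ℝ := Matrix.of fun k i => v i k with hW
  have hWtW : Wᵀ * W = 1 := by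
    ext i j
    simpa [Matrix.mul_apply, Matrix.one_apply, dotProduct, hW, mul_comm] using hv i j
  have hWWt : W * Wᵀ = 1 := mul_eq_one_comm.mp hWtW
  have key : ∀ i, (X *ᵥ v i) ⬝ᵥ (Y *ᵥ v i) = ∑ j, (X * W) j i * (Y * W) j i := by
    intro i
    simp [dotProduct, Matrix.mulVec, Matrix.mul_apply, hW, dotProduct]
  calc fip X Y = Matrix.trace (Xᵀ * Y) := fip_eq_trace X Y
    _ = Matrix.trace (Xᵀ * Y * (W * Wᵀ)) := by rw [hWWt, Matrix.mul_one]
    _ = Matrix.trace ((X * W)ᵀ * (Y * W)) := by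
        conv_rhs => rw [Matrix.transpose_mul, Matrix.mul_assoc, ← Matrix.mul_assoc Xᵀ Y W,
          Matrix.trace_mul_comm, Matrix.mul_assoc]
    _ = fip (X * W) (Y * W) := (fip_eq_trace _ _).symm
    _ = ∑ i, (X *ᵥ v i) ⬝ᵥ (Y *ᵥ v i) := by
        rw [fip, Finset.sum_comm]
        exact Finset.sum_congr rfl fun i _ => (key i).symm

lemma cs {n : ℕ} (x y : Fin n → ℝ) :
    x ⬝ᵥ y ≤ Real.sqrt (x ⬝ᵥ x) * Real.sqrt (y ⬝ᵥ y) := by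
  have h := Finset.sum_mul_sq_le_sq_mul_sq Finset.univ x y
  have hx : (0:ℝ) ≤ x ⬝ᵥ x := Finset.sum_nonneg fun k _ => mul_self_nonneg _
  have hy : (0:ℝ) ≤ y ⬝ᵥ y := Finset.sum_nonneg fun k _ => mul_self_nonneg _
  have h2 : (x ⬝ᵥ y)^2 ≤ (Real.sqrt (x ⬝ᵥ x) * Real.sqrt (y ⬝ᵥ y))^2 := by
    rw [mul_pow, Real.sq_sqrt hx, Real.sq_sqrt hy]
    simpa [dotProduct, pow_two, mul_pow] using h
  calc x ⬝ᵥ y ≤ |x ⬝ᵥ y| := le_abs_self _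
    _ ≤ |Real.sqrt (x ⬝ᵥ x) * Real.sqrt (y ⬝ᵥ y)| := by
        rw [← Real.sqrt_sq_eq_abs, ← Real.sqrt_sq_eq_abs]
        exact Real.sqrt_le_sqrt h2
    _ = _ := abs_of_nonneg (mul_nonneg (Real.sqrt_nonneg _) (Real.sqrt_nonneg _))

lemma rectDiag_sub (p q : ℕ) (f g : ℕ → ℝ) :
    rectDiag p q f - rectDiag p q g = rectDiag p q (fun i => f i - g i) := by
  ext j k
  simp only [Matrix.sub_apply, rectDiag, Matrix.of_apply]
  split_ifs <;> simp

lemma rectDiag_tmul (p q : ℕ) (f g : ℕ → ℝ) :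
    (rectDiag p q f)ᵀ * rectDiag p q g =
      Matrix.diagonal (fun k : Fin q => if (k : ℕ) < p then f k * g k else 0) := by
  ext k l
  simp only [Matrix.mul_apply, Matrix.transpose_apply, rectDiag, Matrix.of_apply,
    Matrix.diagonal_apply]
  by_cases h : (k : ℕ) < p
  · rw [Finset.sum_eq_single ⟨(k : ℕ), h⟩]
    · by_cases hkl : k = l
      · subst hkl; simp [h]
      · have : ((k : ℕ) : ℕ) ≠ (l : ℕ) := fun hc => hkl (Fin.ext hc)
        simp [this, hkl]
    · intro j _ hj
      have : (j : ℕ) ≠ (k : ℕ) := fun hc => hj (Fin.ext hc)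
      simp [this]
    · simp
  · have hz : ∀ j : Fin p, (j : ℕ) ≠ (k : ℕ) := fun j hc => h (hc ▸ j.isLt)
    rw [Finset.sum_eq_zero (fun j _ => by simp [hz j])]
    simp [h]

lemma sandwich {p q : ℕ} (U : Matrix (Fin p) (Fin p) ℝ) (V : Matrix (Fin q) (Fin q) ℝ)
    (hU : Uᵀ * U = 1) (X Y : Matrix (Fin p) (Fin q) ℝ) :
    (U * X * Vᵀ)ᵀ * (U * Y * Vᵀ) = V * (Xᵀ * Y) * Vᵀ := by
  have h1 : (U * X * Vᵀ)ᵀ = V * Xᵀ * Uᵀ := by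
    rw [Matrix.transpose_mul, Matrix.transpose_mul, Matrix.transpose_transpose,
      Matrix.mul_assoc]
  rw [h1]
  calc V * Xᵀ * Uᵀ * (U * Y * Vᵀ) = V * Xᵀ * (Uᵀ * U) * Y * Vᵀ := by
        simp only [Matrix.mul_assoc]
    _ = V * (Xᵀ * Y) * Vᵀ := by rw [hU, Matrix.mul_one]; simp only [Matrix.mul_assoc]

/-- conjugated-diagonal quadratic form -/
lemma diag_sandwich_dot {q : ℕ} (V : Matrix (Fin q) (Fin q) ℝ) (d : Fin q → ℝ)
    (x y : Fin q → ℝ) :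
    x ⬝ᵥ ((V * Matrix.diagonal d * Vᵀ) *ᵥ y) =
      ∑ k, d k * ((Vᵀ *ᵥ x) k * (Vᵀ *ᵥ y) k) := by
  rw [← Matrix.mulVec_mulVec, ← Matrix.mulVec_mulVec, dot_mulVec_left]
  simp [dotProduct, Matrix.mulVec_diagonal]
  exact Finset.sum_congr rfl fun k _ => by ring

lemma diag_transfer {q : ℕ} (V : Matrix (Fin q) (Fin q) ℝ) (hV : Vᵀ * V = 1)
    (d : Fin q → ℝ) (v : Fin q → ℝ) (μ : ℝ)
    (h : (V * Matrix.diagonal d * Vᵀ) *ᵥ v = μ • v) (k : Fin q) :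
    d k * (Vᵀ *ᵥ v) k = μ * (Vᵀ *ᵥ v) k := by
  have h2 : Vᵀ *ᵥ ((V * Matrix.diagonal d * Vᵀ) *ᵥ v) = Vᵀ *ᵥ (μ • v) := by rw [h]
  rw [Matrix.mulVec_mulVec, ← Matrix.mul_assoc, ← Matrix.mul_assoc, hV, Matrix.one_mul,
    ← Matrix.mulVec_mulVec, Matrix.mulVec_smul] at h2
  have := congrFun h2 k
  simpa [Matrix.mulVec_diagonal] using this

end ST

open ST in
theorem stmt_6 (p q : ℕ) (A : Matrix (Fin p) (Fin q) ℝ)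
    (U : Matrix (Fin p) (Fin p) ℝ) (V : Matrix (Fin q) (Fin q) ℝ)
    (hU : Uᵀ * U = 1) (hV : Vᵀ * V = 1)
    (a : ℕ → ℝ) (ha : ∀ i < min p q, 0 ≤ a i)
    (hA : A = U * rectDiag p q a * Vᵀ)
    (lam : ℝ) (hlam : 0 < lam)
    (Bstar : Matrix (Fin p) (Fin q) ℝ)
    (hBstar : Bstar = U * rectDiag p q (fun i => max (a i - lam) 0) * Vᵀ) :
    ∀ B : Matrix (Fin p) (Fin q) ℝ,
      (1 / 2) * frobNorm (Bstar - A) ^ 2 + lam * nuclearNorm Bstar ≤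
        (1 / 2) * frobNorm (B - A) ^ 2 + lam * nuclearNorm B := by
  intro B
  classical
  -- abbreviations
  set c : ℕ → ℝ := fun i => max (a i - lam) 0 with hc
  set dfun : ℕ → ℝ := fun i => a i - c i with hd
  set G : Matrix (Fin p) (Fin q) ℝ := A - Bstar with hGdef
  have hVVt : V * Vᵀ = 1 := mul_eq_one_comm.mp hV
  have hG : G = U * rectDiag p q dfun * Vᵀ := by
    rw [hGdef, hA, hBstar, ← Matrix.sub_mul, ← Matrix.mul_sub, rectDiag_sub]
  -- truncated diagonal entry functions on Fin q
  set cc : Fin q → ℝ := fun k => if (k : ℕ) < p then c k else 0 with hcc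
  set dd : Fin q → ℝ := fun k => if (k : ℕ) < p then dfun k else 0 with hdd
  have hcc_nonneg : ∀ k, 0 ≤ cc k := by
    intro k; rw [hcc]; dsimp only; split_ifs; · exact le_max_right _ _
    · exact le_refl 0
  have hdd_bound : ∀ k, 0 ≤ dd k ∧ dd k ≤ lam := by
    intro k; rw [hdd]; dsimp only; split_ifs with hk
    · have hak : 0 ≤ a k := ha k (lt_min hk k.isLt)
      constructor
      · rw [hd]; dsimp only; rw [hc]; dsimp only
        rcases le_or_gt (a (k:ℕ) - lam) 0 with h | h
        · rw [max_eq_right h]; simpa using hak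
        · rw [max_eq_left h.le]; linarith
      · rw [hd]; dsimp only; rw [hc]; dsimp only
        rcases le_or_gt (a (k:ℕ) - lam) 0 with h | h
        · rw [max_eq_right h]; linarith
        · rw [max_eq_left h.le]; linarith
    · exact ⟨le_refl 0, hlam.le⟩
  -- structural identities
  have hGtG : Gᵀ * G = V * Matrix.diagonal (fun k => dd k * dd k) * Vᵀ := by
    have hfun : (fun k : Fin q => if (k : ℕ) < p then dfun k * dfun k else 0)
        = fun k => dd k * dd k := by
      funext k; rw [hdd]; dsimp only; split_ifs <;> simp
    rw [hG, sandwich U V hU, rectDiag_tmul, hfun]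
  have hGtB : Gᵀ * Bstar = V * Matrix.diagonal (fun k => dd k * cc k) * Vᵀ := by
    have hfun : (fun k : Fin q => if (k : ℕ) < p then dfun k * c k else 0)
        = fun k => dd k * cc k := by
      funext k; rw [hdd, hcc]; dsimp only; split_ifs <;> simp
    rw [hG, hBstar, sandwich U V hU, rectDiag_tmul, hfun]
  have hBtB : Bstarᵀ * Bstar = V * Matrix.diagonal (fun k => cc k * cc k) * Vᵀ := by
    have hfun : (fun k : Fin q => if (k : ℕ) < p then c k * c k else 0)
        = fun k => cc k * cc k := by
      funext k; rw [hcc]; dsimp only; split_ifs <;> simp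
    rw [hBstar, sandwich U V hU, rectDiag_tmul, hfun]
  -- operator norm bound for G
  have hVt_norm : ∀ x : Fin q → ℝ, (Vᵀ *ᵥ x) ⬝ᵥ (Vᵀ *ᵥ x) = x ⬝ᵥ x := by
    intro x
    rw [dot_mulVec_mulVec, Matrix.transpose_transpose, hVVt, Matrix.one_mulVec]
  have hGop : ∀ x : Fin q → ℝ, (G *ᵥ x) ⬝ᵥ (G *ᵥ x) ≤ lam ^ 2 * (x ⬝ᵥ x) := by
    intro x
    rw [dot_mulVec_mulVec, hGtG, diag_sandwich_dot]
    calc ∑ k, (dd k * dd k) * ((Vᵀ *ᵥ x) k * (Vᵀ *ᵥ x) k)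
        ≤ ∑ k, lam ^ 2 * ((Vᵀ *ᵥ x) k * (Vᵀ *ᵥ x) k) := by
          apply Finset.sum_le_sum
          intro k _
          obtain ⟨h0, h1⟩ := hdd_bound k
          have : dd k * dd k ≤ lam ^ 2 := by nlinarith
          exact mul_le_mul_of_nonneg_right this (mul_self_nonneg _)
      _ = lam ^ 2 * ∑ k, (Vᵀ *ᵥ x) k * (Vᵀ *ᵥ x) k := by rw [Finset.mul_sum]
      _ = lam ^ 2 * (x ⬝ᵥ x) := by rw [show (∑ k, (Vᵀ *ᵥ x) k * (Vᵀ *ᵥ x) k) = (Vᵀ *ᵥ x) ⬝ᵥ (Vᵀ *ᵥ x) from rfl, hVt_norm]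
  -- duality: fip G B ≤ lam * nuclearNorm B
  have key1 : fip G B ≤ lam * nuclearNorm B := by
    rw [fip_eq_sum_dot G B (evec B) (evec_dot B), nuclearNorm, Finset.mul_sum]
    apply Finset.sum_le_sum
    intro i _
    have hv1 : evec B i ⬝ᵥ evec B i = 1 := by rw [evec_dot]; simp
    have h1 : (G *ᵥ evec B i) ⬝ᵥ (B *ᵥ evec B i) ≤
        Real.sqrt ((G *ᵥ evec B i) ⬝ᵥ (G *ᵥ evec B i)) *
        Real.sqrt ((B *ᵥ evec B i) ⬝ᵥ (B *ᵥ evec B i)) := cs _ _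
    have h2 : Real.sqrt ((G *ᵥ evec B i) ⬝ᵥ (G *ᵥ evec B i)) ≤ lam := by
      have := hGop (evec B i)
      rw [hv1, mul_one] at this
      calc Real.sqrt ((G *ᵥ evec B i) ⬝ᵥ (G *ᵥ evec B i)) ≤ Real.sqrt (lam ^ 2) :=
            Real.sqrt_le_sqrt this
        _ = lam := Real.sqrt_sq hlam.le
    calc (G *ᵥ evec B i) ⬝ᵥ (B *ᵥ evec B i) ≤ _ := h1
      _ ≤ lam * Real.sqrt ((B *ᵥ evec B i) ⬝ᵥ (B *ᵥ evec B i)) := by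
          apply mul_le_mul_of_nonneg_right h2 (Real.sqrt_nonneg _)
      _ = lam * singVals B i := by rw [singVals_eq]
  -- exact identity for Bstar
  have key2 : fip G Bstar = lam * nuclearNorm Bstar := by
    rw [fip_eq_sum_dot G Bstar (evec Bstar) (evec_dot Bstar), nuclearNorm, Finset.mul_sum]
    apply Finset.sum_congr rfl
    intro i _
    set μ := (Matrix.isHermitian_conjTranspose_mul_self Bstar).eigenvalues i with hμ
    set w : Fin q → ℝ := Vᵀ *ᵥ evec Bstar i with hw
    have heig : (V * Matrix.diagonal (fun k => cc k * cc k) * Vᵀ) *ᵥ evec Bstar i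
        = μ • evec Bstar i := by rw [← hBtB]; exact evec_eigen Bstar i
    have htr : ∀ k, (cc k * cc k) * w k = μ * w k :=
      fun k => diag_transfer V hV _ _ μ heig k
    have hμ_eq : (Bstar *ᵥ evec Bstar i) ⬝ᵥ (Bstar *ᵥ evec Bstar i) = μ := Mv_dot_Mv Bstar i
    have hμ_nonneg : 0 ≤ μ := by
      rw [← hμ_eq]; exact Finset.sum_nonneg fun k _ => mul_self_nonneg _
    have hptw : ∀ k, dd k * cc k * (w k * w k) = lam * Real.sqrt μ * (w k * w k) := by
      intro k
      by_cases hwk : w k = 0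
      · rw [hwk]; ring
      · have hck : cc k * cc k = μ := by
          have := htr k
          exact mul_right_cancel₀ hwk this
        have hsq : Real.sqrt μ = cc k := by
          rw [← hck]; exact Real.sqrt_mul_self (hcc_nonneg k)
        rcases eq_or_lt_of_le (hcc_nonneg k) with h0 | h0
        · rw [hsq, ← h0]; ring
        · -- cc k > 0, so k < p and a k - lam > 0, hence dd k = lam
          have hkp : (k : ℕ) < p := by
            by_contra hkp
            rw [hcc] at h0; dsimp only at h0; rw [if_neg hkp] at h0; exact lt_irrefl 0 h0
          have hak : lam < a k := by
            rw [hcc] at h0; dsimp only at h0; rw [if_pos hkp] at h0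
            rw [hc] at h0; dsimp only at h0
            by_contra hcon
            push_neg at hcon
            rw [max_eq_right (by linarith)] at h0
            exact lt_irrefl 0 h0
          have hddk : dd k = lam := by
            rw [hdd]; dsimp only; rw [if_pos hkp, hd]; dsimp only
            rw [hc]; dsimp only
            rw [max_eq_left (by linarith)]
            ring
          rw [hddk, hsq]
      -- done
    have hsum : (G *ᵥ evec Bstar i) ⬝ᵥ (Bstar *ᵥ evec Bstar i)
        = ∑ k, dd k * cc k * (w k * w k) := by
      rw [dot_mulVec_mulVec, hGtB, diag_sandwich_dot]
    have hw1 : ∑ k, w k * w k = 1 := by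
      have := hVt_norm (evec Bstar i)
      rw [← hw] at this
      rw [show (∑ k, w k * w k) = w ⬝ᵥ w from rfl, this]
      rw [evec_dot]; simp
    rw [hsum]
    calc ∑ k, dd k * cc k * (w k * w k) = ∑ k, lam * Real.sqrt μ * (w k * w k) :=
          Finset.sum_congr rfl fun k _ => hptw k
      _ = lam * Real.sqrt μ * ∑ k, w k * w k := by rw [Finset.mul_sum]
      _ = lam * Real.sqrt μ := by rw [hw1, mul_one]
      _ = lam * singVals Bstar i := rfl
  -- Frobenius norm squared
  have hfrob : ∀ X : Matrix (Fin p) (Fin q) ℝ, frobNorm X ^ 2 = fip X X := by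
    intro X
    rw [frobNorm, Real.sq_sqrt (by positivity)]
    simp [fip, pow_two]
  -- expansion identity
  have hexp : fip (B - A) (B - A) =
      fip (B - Bstar) (B - Bstar) + 2 * fip G Bstar - 2 * fip G B
        + fip (Bstar - A) (Bstar - A) := by
    simp only [fip, hGdef, Matrix.sub_apply, Finset.mul_sum,
      ← Finset.sum_add_distrib, ← Finset.sum_sub_distrib]
    apply Finset.sum_congr rfl; intro j _
    apply Finset.sum_congr rfl; intro k _
    ring
  have hBB : 0 ≤ fip (B - Bstar) (B - Bstar) :=
    Finset.sum_nonneg fun j _ => Finset.sum_nonneg fun k _ => mul_self_nonneg _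
  rw [hfrob, hfrob]
  nlinarith [key1, key2, hexp, hBB]
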